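/- Let V be a valuation domain with quotient field K and maximal ideal M, and let I be a fractional ideal of V. Then I is not strictly divisorial if and only if I = cM for some c in K. -/
import Mathlib


open scoped Pointwise Classical

section Defs

variable {K : Type*} [Field K] {Γ : Type*} [LinearOrderedCommGroupWithZero Γ]
variable {Λ : Type*} [LinearOrder Λ]

/-- `E = {s ν}` is pseudo-convergent: (additively) `v(s_ρ−s_ν) < v(s_σ−s_ρ)` for `ν<ρ<σ`.
In Mathlib's multiplicative convention this reads `v (s σ - s ρ) < v (s ρ - s ν)`. -/
def IsPseudoConvergent (v : Valuation K Γ) (s : Λ → K) : Prop :=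
  ∀ ⦃ν ρ σ : Λ⦄, ν < ρ → ρ < σ → v (s σ - s ρ) < v (s ρ - s ν)

/-- `E = {s ν}` is pseudo-divergent: (additively) `v(s_ρ−s_ν) > v(s_σ−s_ρ)` for `ν<ρ<σ`. -/
def IsPseudoDivergent (v : Valuation K Γ) (s : Λ → K) : Prop :=
  ∀ ⦃ν ρ σ : Λ⦄, ν < ρ → ρ < σ → v (s ρ - s ν) < v (s σ - s ρ)

/-- `E = {s ν}` is pseudo-stationary: the terms are distinct and all pairwise differences
have the same (nonzero) value. -/
def IsPseudoStationary (v : Valuation K Γ) (s : Λ → K) : Prop :=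
  (∀ ⦃ν μ : Λ⦄, ν ≠ μ → s ν ≠ s μ) ∧
    ∀ ⦃ν μ ν' μ' : Λ⦄, ν ≠ μ → ν' ≠ μ' → v (s ν - s μ) = v (s ν' - s μ')

/-- A pseudo-monotone sequence: pseudo-convergent, pseudo-divergent or pseudo-stationary. -/
def IsPseudoMonotone (v : Valuation K Γ) (s : Λ → K) : Prop :=
  IsPseudoConvergent v s ∨ IsPseudoDivergent v s ∨ IsPseudoStationary v s

/-- `α` is a pseudo-limit of the pseudo-convergent sequence `s`:
`v(α − s_ν) = δ_ν` for all `ν`, where `δ_ν = v(s_ρ − s_ν)` for any `ρ > ν`. -/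
def IsPseudoLimitPcv (v : Valuation K Γ) (s : Λ → K) (α : K) : Prop :=
  ∀ ⦃ν ρ : Λ⦄, ν < ρ → v (α - s ν) = v (s ρ - s ν)

/-- `α` is a pseudo-limit of the pseudo-divergent sequence `s`:
`v(α − s_ν) = δ_ν` for all sufficiently large `ν`, where `δ_ν = v(s_ρ − s_ν)` for any `ρ < ν`. -/
def IsPseudoLimitPdv (v : Valuation K Γ) (s : Λ → K) (α : K) : Prop :=
  ∃ N : Λ, ∀ ⦃ν : Λ⦄, N ≤ ν → ∀ ⦃ρ : Λ⦄, ρ < ν → v (α - s ν) = v (s ρ - s ν)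

/-- `α` is a pseudo-limit of the pseudo-stationary sequence `s`:
`v(α − s_ν) = δ` for all sufficiently large `ν`, where `δ` is the breadth. -/
def IsPseudoLimitPst (v : Valuation K Γ) (s : Λ → K) (α : K) : Prop :=
  ∃ N : Λ, ∀ ⦃ν : Λ⦄, N ≤ ν → ∀ ⦃μ μ' : Λ⦄, μ ≠ μ' → v (α - s ν) = v (s μ - s μ')

/-- `α` is a pseudo-limit of a strictly pseudo-monotone sequence `s`. -/
def IsPseudoLimitSPM (v : Valuation K Γ) (s : Λ → K) (α : K) : Prop :=
  (IsPseudoConvergent v s ∧ IsPseudoLimitPcv v s α) ∨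
    (IsPseudoDivergent v s ∧ IsPseudoLimitPdv v s α)

/-- The breadth ideal of a pseudo-convergent sequence:
(additively) `{x : v(x) > δ_ν for all ν}`. -/
def BreadthPcv (v : Valuation K Γ) (s : Λ → K) : Set K :=
  {x : K | ∀ ⦃ν ρ : Λ⦄, ν < ρ → v x < v (s ρ - s ν)}

/-- The breadth ideal of a pseudo-divergent sequence:
(additively) `{x : v(x) > δ_ν for some ν}`. -/
def BreadthPdv (v : Valuation K Γ) (s : Λ → K) : Set K :=
  {x : K | ∃ ν ρ : Λ, ρ < ν ∧ v x < v (s ρ - s ν)}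

/-- The breadth ideal of a pseudo-stationary sequence: (additively) `{x : v(x) ≥ δ}`. -/
def BreadthPst (v : Valuation K Γ) (s : Λ → K) : Set K :=
  {x : K | ∀ ⦃ν μ : Λ⦄, ν ≠ μ → v x ≤ v (s ν - s μ)}

/-- The breadth ideal of a sequence which is definitively either pseudo-convergent or
pseudo-stationary: `{x : v(x) ≤ v(s ρ - s ν)` for all sufficiently large `ν < ρ}`. -/
def BreadthCvStat (v : Valuation K Γ) (s : Λ → K) : Set K :=
  {x : K | ∃ N : Λ, ∀ ⦃ν ρ : Λ⦄, N ≤ ν → ν < ρ → v x ≤ v (s ρ - s ν)}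

/-- The ring `V_E` of rational functions mapping the tail of `E` into the valuation ring,
as a subset of `K(X)`. -/
def VESet (v : Valuation K Γ) (s : Λ → K) : Set (RatFunc K) :=
  {φ : RatFunc K | ∃ N : Λ, ∀ ⦃ν : Λ⦄, N ≤ ν → v (RatFunc.eval (RingHom.id K) (s ν) φ) ≤ 1}

end Defs

section FracIdeals

variable {K : Type*} [Field K]

/-- `I` is a fractional ideal of the valuation subring `A` of `K`. -/
def IsFractionalSub (A : ValuationSubring K) (I : Submodule A K) : Prop :=
  ∃ a : K, a ∈ A ∧ a ≠ 0 ∧ ∀ x ∈ I, a * x ∈ A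

/-- `I` is strictly divisorial: it equals the intersection of all principal fractional
ideals properly containing it. -/
def IsStrictlyDivisorial (A : ValuationSubring K) (I : Submodule A K) : Prop :=
  I = ⨅ c ∈ {c : K | I < Submodule.span A {c}}, Submodule.span A {c}

end FracIdeals

section Aux
variable {K : Type*} [Field K]

theorem aux_mem_span (A : ValuationSubring K) (x d : K) :
    x ∈ Submodule.span A {d} ↔ A.valuation x ≤ A.valuation d := by
  rw [Submodule.mem_span_singleton]
  constructor
  · rintro ⟨a, rfl⟩
    rw [Algebra.smul_def]
    calc A.valuation (algebraMap A K a * d)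
        = A.valuation (algebraMap A K a) * A.valuation d := map_mul _ _ _
      _ ≤ 1 * A.valuation d := mul_le_mul_left (A.valuation_le_one a) _
      _ = A.valuation d := one_mul _
  · intro h
    by_cases hd : d = 0
    · subst hd
      have : A.valuation x = 0 := le_zero_iff.mp (by simpa using h)
      exact ⟨0, by simp [(Valuation.zero_iff _).mp this]⟩
    · refine ⟨⟨x / d, A.mem_of_valuation_le_one _ ?_⟩, ?_⟩
      · rw [map_div₀]
        exact div_le_one_of_le₀ h (zero_le')
      · show (x / d) • d = x
        rw [smul_eq_mul, div_mul_cancel₀ _ hd]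

theorem aux_mem_smul (A : ValuationSubring K) {c : K} (hc : c ≠ 0) (x : K) :
    x ∈ c • {y : K | A.valuation y < 1} ↔ A.valuation x < A.valuation c := by
  have hc0 : A.valuation c ≠ 0 := (Valuation.ne_zero_iff _).mpr hc
  constructor
  · rintro ⟨y, hy, rfl⟩
    have : A.valuation (c • y) = A.valuation c * A.valuation y := by
      rw [smul_eq_mul, map_mul]
    rw [this]
    calc A.valuation c * A.valuation y < A.valuation c * 1 :=
          mul_lt_mul_of_le_of_lt_of_nonneg_of_pos le_rfl hy zero_le' (zero_lt_iff.mpr hc0)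
      _ = A.valuation c := mul_one _
  · intro h
    refine ⟨x / c, ?_, ?_⟩
    · show A.valuation (x / c) < 1
      rw [map_div₀]
      exact (div_lt_iff₀ (zero_lt_iff.mpr hc0)).mpr (by rwa [one_mul])
    · show c • (x / c) = x
      rw [smul_eq_mul, mul_div_cancel₀ _ hc]

theorem aux_lt_of_notMem (A : ValuationSubring K) (I : Submodule A K)
    {x : K} (hx : x ∉ I) : ∀ z ∈ I, A.valuation z < A.valuation x := by
  intro z hz
  have hx0 : x ≠ 0 := fun h => hx (h ▸ I.zero_mem)
  by_contra h
  push_neg at h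
  have hz0 : z ≠ 0 := by
    rintro rfl
    simp only [map_zero, le_zero_iff] at h
    exact hx0 ((Valuation.zero_iff _).mp h)
  apply hx
  have hxz : A.valuation (x / z) ≤ 1 := by
    rw [map_div₀]
    exact div_le_one_of_le₀ h (zero_le')
  have := I.smul_mem (⟨x / z, A.mem_of_valuation_le_one _ hxz⟩ : A) hz
  have hxe : (⟨x / z, A.mem_of_valuation_le_one _ hxz⟩ : A) • z = x := by
    show (x / z) • z = x
    rw [smul_eq_mul, div_mul_cancel₀ _ hz0]
  rwa [hxe] at this
end Aux

/-- Let `V` be a valuation domain with quotient field `K` and maximal ideal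
`M`, and let `I` be a (nonzero) fractional ideal of `V`. Then `I` is not strictly divisorial
if and only if `I = cM` for some `c ∈ K`. Here the maximal ideal of `V`, viewed inside `K`,
is `{x : K | v(x) < 1}` (multiplicative notation). -/


theorem stmt0 {K : Type*} [Field K] (A : ValuationSubring K) (I : Submodule A K)
    (hfrac : IsFractionalSub A I) (hI0 : I ≠ ⊥) :
    ¬ IsStrictlyDivisorial A I ↔
      ∃ c : K, (I : Set K) = c • {x : K | A.valuation x < 1} := by
  constructor
  · intro hns
    by_contra hcon
    push_neg at hcon
    apply hns
    apply le_antisymm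
    · exact le_iInf₂ fun d hd => hd.le
    · intro x hx
      by_contra hxI
      have hx0 : x ≠ 0 := fun h => hxI (h ▸ I.zero_mem)
      have hsub : (I : Set K) ⊆ x • {y : K | A.valuation y < 1} := fun z hz =>
        (aux_mem_smul A hx0 z).mpr (aux_lt_of_notMem A I hxI z hz)
      obtain ⟨y, hyM, hyI⟩ := Set.exists_of_ssubset (hsub.ssubset_of_ne (hcon x))
      have hyx : A.valuation y < A.valuation x := (aux_mem_smul A hx0 y).mp hyM
      have hlt : I < Submodule.span A {y} := by
        refine lt_of_le_of_ne ?_ ?_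
        · intro z hz
          exact (aux_mem_span A z y).mpr (aux_lt_of_notMem A I hyI z hz).le
        · intro h
          exact hyI (h ▸ (aux_mem_span A y y).mpr le_rfl)
      simp only [Submodule.mem_iInf] at hx
      have := (aux_mem_span A x y).mp (hx y hlt)
      exact absurd this (not_le.mpr hyx)
  · rintro ⟨c, hc⟩ hne
    have hc0 : c ≠ 0 := by
      rintro rfl
      apply hI0
      have hMne : ({x : K | A.valuation x < 1} : Set K).Nonempty :=
        ⟨0, by simp [zero_lt_one]⟩
      rw [Set.zero_smul_set hMne] at hc
      ext z
      simp only [Submodule.mem_bot]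
      constructor
      · intro hz
        have : z ∈ (I : Set K) := hz
        rw [hc] at this
        simpa using this
      · rintro rfl; exact I.zero_mem
    have hmem : c ∈ (⨅ d ∈ {d : K | I < Submodule.span A {d}}, Submodule.span A {d}) := by
      simp only [Submodule.mem_iInf]
      intro d hd
      rw [aux_mem_span]
      by_contra hlt
      push_neg at hlt
      have hle : Submodule.span A {d} ≤ I := by
        intro z hz
        have h1 : A.valuation z ≤ A.valuation d := (aux_mem_span A z d).mp hz
        have h2 : z ∈ (I : Set K) := by
          rw [hc]
          exact (aux_mem_smul A hc0 z).mpr (lt_of_le_of_lt h1 hlt)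
        exact h2
      exact hd.not_ge hle
    rw [← hne] at hmem
    have : c ∈ (I : Set K) := hmem
    rw [hc] at this
    exact absurd ((aux_mem_smul A hc0 c).mp this) (lt_irrefl _)
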